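/- Let k ∈ ℕ⁺ and γ ∈ (0,1). Consider two chunk-level policies π1^k, π2^k (Markov kernels from states to action chunks ã = a_{0:k−1}) evaluated in chunk-level world models T1^k(s'|s, ã) and T2^k(s'|s, ã), respectively, starting from the same initial state distribution, with per-step rewards in [0, r_max] (so chunk rewards are bounded by r_max(1 − γ^k)/(1 − γ)) and shared chunk reward function. Define ε_π^k = sup_s D_TV(π1^k(·|s), π2^k(·|s)) and ε_m^k = sup_t E_{s∼d_t^{π1^k}}[ D_TV(T1^k(·|s, ã), T2^k(·|s, ã)) ], where d_t^{π1^k} is the state distribution at macro-step t of the first process. Then |V(π1^k) − V(π2^k)| ≤ (2 r_max/(1 − γ)) · [ (γ^k/(1 − γ^k)) ε_π^k + ε_π^k + (γ^k/(1 − γ^k)) ε_m^k ]. -/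

import Mathlib

open MeasureTheory ProbabilityTheory

/-- Total variation distance between two measures:
`D_TV(μ, ν) = sup_{A measurable} |μ(A) − ν(A)|`. -/
noncomputable def tvDist {S : Type*} [MeasurableSpace S] (μ ν : Measure S) : ℝ :=
  ⨆ A : {A : Set S // MeasurableSet A}, |(μ A.1).toReal - (ν A.1).toReal|

/-- The joint state–action distribution obtained from a state distribution `μ`
and a (chunk-level) policy `π`. -/
noncomputable def saDist {S Act : Type*} [MeasurableSpace S] [MeasurableSpace Act]
    (μ : Measure S) (π : S → Measure Act) : Measure (S × Act) :=
  μ.bind (fun s => (π s).map (fun a => (s, a)))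

/-- The state distribution at macro-step `t` of a (possibly time-inhomogeneous) process
with initial state distribution `μ0`, policies `π t` and transition kernels `T t`. -/
noncomputable def stateDist {S Act : Type*} [MeasurableSpace S] [MeasurableSpace Act]
    (μ0 : Measure S) (π : ℕ → S → Measure Act) (T : ℕ → S × Act → Measure S) :
    ℕ → Measure S
  | 0 => μ0
  | t + 1 => (saDist (stateDist μ0 π T t) (π t)).bind (T t)

/-- The discounted occupancy measure `d = (1 − β) Σ_{t≥0} β^t d_t`. -/
noncomputable def occ {X : Type*} [MeasurableSpace X] (β : ℝ) (d : ℕ → Measure X) :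
    Measure X :=
  Measure.sum fun t => ENNReal.ofReal ((1 - β) * β ^ t) • d t

/-- The state–action distribution at macro-step `t` of the process
`(μ0, π, T)`. -/
noncomputable def saDistAt {S Act : Type*} [MeasurableSpace S] [MeasurableSpace Act]
    (μ0 : Measure S) (π : ℕ → S → Measure Act) (T : ℕ → S × Act → Measure S)
    (t : ℕ) : Measure (S × Act) :=
  saDist (stateDist μ0 π T t) (π t)

/-- The expected discounted return `V = (1/(1 − β)) ∫ r̃ d d^π`, where `d^π` is the
discounted state–action occupancy measure of the process `(μ0, π, T)` and `β` the
macro-step discount factor. -/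
noncomputable def value {S Act : Type*} [MeasurableSpace S] [MeasurableSpace Act]
    (β : ℝ) (rew : S × Act → ℝ)
    (μ0 : Measure S) (π : ℕ → S → Measure Act) (T : ℕ → S × Act → Measure S) : ℝ :=
  (1 - β)⁻¹ * ∫ p, rew p ∂(occ β (saDistAt μ0 π T))

section Helpers

variable {X Y : Type*} [MeasurableSpace X] [MeasurableSpace Y]

lemma tvDist_nonneg (μ ν : Measure X) : 0 ≤ tvDist μ ν :=
  Real.iSup_nonneg fun _ => abs_nonneg _

lemma tv_term_le_one (μ ν : Measure X) [IsProbabilityMeasure μ] [IsProbabilityMeasure ν]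
    (A : {A : Set X // MeasurableSet A}) : |(μ A.1).toReal - (ν A.1).toReal| ≤ 1 := by
  have h1 : (μ A.1).toReal ≤ 1 := by
    simpa using ENNReal.toReal_mono (by simp) (prob_le_one (μ := μ) (s := A.1))
  have h2 : (ν A.1).toReal ≤ 1 := by
    simpa using ENNReal.toReal_mono (by simp) (prob_le_one (μ := ν) (s := A.1))
  have h3 : 0 ≤ (μ A.1).toReal := ENNReal.toReal_nonneg
  have h4 : 0 ≤ (ν A.1).toReal := ENNReal.toReal_nonneg
  rw [abs_sub_le_iff]; constructor <;> linarith

lemma tvDist_le_one (μ ν : Measure X) [IsProbabilityMeasure μ] [IsProbabilityMeasure ν] :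
    tvDist μ ν ≤ 1 :=
  ciSup_le fun A => tv_term_le_one μ ν A

lemma abs_sub_le_tvDist (μ ν : Measure X) [IsProbabilityMeasure μ] [IsProbabilityMeasure ν]
    {A : Set X} (hA : MeasurableSet A) :
    |(μ A).toReal - (ν A).toReal| ≤ tvDist μ ν :=
  le_ciSup (f := fun A : {A : Set X // MeasurableSet A} => |(μ A.1).toReal - (ν A.1).toReal|)
    ⟨1, by rintro y ⟨B, rfl⟩; exact tv_term_le_one μ ν B⟩ ⟨A, hA⟩

lemma integrable_of_bound (μ : Measure X) [IsFiniteMeasure μ] {f : X → ℝ}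
    (hf : AEStronglyMeasurable f μ) (C : ℝ) (h : ∀ x, ‖f x‖ ≤ C) : Integrable f μ :=
  (integrable_const C).mono' hf (Filter.Eventually.of_forall h)

/-- TV bound on difference of integrals of a `[0,C]`-valued function. -/
lemma abs_integral_sub_le_tvDist (μ ν : Measure X) [IsProbabilityMeasure μ]
    [IsProbabilityMeasure ν] {f : X → ℝ} (hf : Measurable f) {C : ℝ} (hC : 0 ≤ C)
    (h0 : ∀ x, 0 ≤ f x) (h1 : ∀ x, f x ≤ C) :
    |∫ x, f x ∂μ - ∫ x, f x ∂ν| ≤ C * tvDist μ ν := by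
  have hbd : ∀ x, ‖f x‖ ≤ C := fun x => by
    rw [Real.norm_eq_abs, abs_of_nonneg (h0 x)]; exact h1 x
  have hintμ : Integrable f μ := integrable_of_bound μ hf.aestronglyMeasurable C hbd
  have hintν : Integrable f ν := integrable_of_bound ν hf.aestronglyMeasurable C hbd
  have key : ∀ (ρ : Measure X), IsProbabilityMeasure ρ → Integrable f ρ →
      ∫ x, f x ∂ρ = ∫ t in Set.Ioc 0 C, (ρ {a | t ≤ f a}).toReal := by
    intro ρ hρ hint
    exact hint.integral_eq_integral_Ioc_meas_le (Filter.Eventually.of_forall h0)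
      (Filter.Eventually.of_forall h1)
  rw [key μ inferInstance hintμ, key ν inferInstance hintν]
  have hmeasg : ∀ (ρ : Measure X), IsProbabilityMeasure ρ →
      Measurable (fun t : ℝ => (ρ {a | t ≤ f a}).toReal) := by
    intro ρ hρ
    refine (Antitone.measurable ?_)
    intro s t hst
    refine ENNReal.toReal_mono (measure_ne_top _ _) (measure_mono ?_)
    intro a ha; exact le_trans hst ha
  have hintg : ∀ (ρ : Measure X), IsProbabilityMeasure ρ →
      IntegrableOn (fun t : ℝ => (ρ {a | t ≤ f a}).toReal) (Set.Ioc 0 C) := by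
    intro ρ hρ
    haveI : IsFiniteMeasure (volume.restrict (Set.Ioc 0 C)) := by
      constructor
      rw [Measure.restrict_apply_univ, Real.volume_Ioc]
      exact ENNReal.ofReal_lt_top
    refine integrable_of_bound _ ((hmeasg ρ hρ).aestronglyMeasurable) 1 (fun t => ?_)
    rw [Real.norm_eq_abs, abs_of_nonneg ENNReal.toReal_nonneg]
    simpa using ENNReal.toReal_mono (by simp) (prob_le_one (μ := ρ) (s := {a | t ≤ f a}))
  rw [← integral_sub (hintg μ inferInstance) (hintg ν inferInstance)]
  calc |∫ t in Set.Ioc 0 C, ((μ {a | t ≤ f a}).toReal - (ν {a | t ≤ f a}).toReal)|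
      ≤ ∫ t in Set.Ioc 0 C, |(μ {a | t ≤ f a}).toReal - (ν {a | t ≤ f a}).toReal| := by
        simpa [Real.norm_eq_abs] using norm_integral_le_integral_norm
          (μ := volume.restrict (Set.Ioc 0 C))
          (fun t : ℝ => (μ {a | t ≤ f a}).toReal - (ν {a | t ≤ f a}).toReal)
    _ ≤ ∫ _t in Set.Ioc 0 C, tvDist μ ν := by
        haveI : IsFiniteMeasure (volume.restrict (Set.Ioc 0 C)) := by
          constructor
          rw [Measure.restrict_apply_univ, Real.volume_Ioc]
          exact ENNReal.ofReal_lt_top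
        refine integral_mono (((hintg μ inferInstance).sub (hintg ν inferInstance)).abs)
          (integrable_const _) (fun t => ?_)
        exact abs_sub_le_tvDist μ ν (hf measurableSet_Ici)
    _ = C * tvDist μ ν := by
        rw [setIntegral_const, measureReal_def, Real.volume_Ioc, smul_eq_mul]
        rw [ENNReal.toReal_ofReal (by linarith)]
        ring_nf

end Helpers


section Helpers2

variable {X Y : Type*} [MeasurableSpace X] [MeasurableSpace Y]

lemma measurable_integral_kernel' {κ : X → Measure Y} (hκ : Measurable κ)
    (hκp : ∀ x, IsProbabilityMeasure (κ x)) {f : X × Y → ℝ} (hf : Measurable f) :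
    Measurable fun x => ∫ y, f (x, y) ∂κ x := by
  letI K : Kernel X Y := ⟨κ, hκ⟩
  haveI : IsMarkovKernel K := ⟨hκp⟩
  exact (MeasureTheory.StronglyMeasurable.integral_kernel_prod_right' (κ := K)
    hf.stronglyMeasurable).measurable

lemma isProbabilityMeasure_bind (μ : Measure X) [IsProbabilityMeasure μ] {κ : X → Measure Y}
    (hκ : Measurable κ) (hκp : ∀ x, IsProbabilityMeasure (κ x)) :
    IsProbabilityMeasure (μ.bind κ) := by
  constructor
  rw [Measure.bind_apply MeasurableSet.univ hκ.aemeasurable]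
  simp [measure_univ]

lemma integral_bind' (μ : Measure X) [IsProbabilityMeasure μ] {κ : X → Measure Y}
    (hκ : Measurable κ) (hκp : ∀ x, IsProbabilityMeasure (κ x)) {f : Y → ℝ}
    (hf : Measurable f) {C : ℝ} (h0 : ∀ y, 0 ≤ f y) (h1 : ∀ y, f y ≤ C) :
    ∫ y, f y ∂(μ.bind κ) = ∫ x, (∫ y, f y ∂(κ x)) ∂μ := by
  haveI := isProbabilityMeasure_bind μ hκ hκp
  have hbd : ∀ y, ‖f y‖ ≤ C := fun y => by
    rw [Real.norm_eq_abs, abs_of_nonneg (h0 y)]; exact h1 y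
  have hg : Measurable fun x => ∫ y, f y ∂(κ x) :=
    measurable_integral_kernel' hκ hκp (hf.comp measurable_snd)
  rw [integral_eq_lintegral_of_nonneg_ae (Filter.Eventually.of_forall h0)
    hf.aestronglyMeasurable,
    integral_eq_lintegral_of_nonneg_ae
      (Filter.Eventually.of_forall (fun x => integral_nonneg h0)) hg.aestronglyMeasurable,
    Measure.lintegral_bind hκ.aemeasurable hf.ennreal_ofReal.aemeasurable]
  congr 1
  refine lintegral_congr fun x => ?_
  rw [← ofReal_integral_eq_lintegral_ofReal
    (integrable_of_bound (κ x) hf.aestronglyMeasurable C hbd)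
    (Filter.Eventually.of_forall h0)]

lemma measurable_saKernel {π : X → Measure Y} (hπ : Measurable π)
    (hπp : ∀ s, IsProbabilityMeasure (π s)) :
    Measurable fun s => (π s).map (fun a => (s, a)) := by
  apply Measure.measurable_of_measurable_coe
  intro A hA
  have : (fun s => (π s).map (fun a => (s, a)) A) = fun s => π s (Prod.mk s ⁻¹' A) := by
    funext s
    rw [Measure.map_apply measurable_prodMk_left hA]
  rw [this]
  letI K : Kernel X Y := ⟨π, hπ⟩
  haveI : IsMarkovKernel K := ⟨hπp⟩
  exact Kernel.measurable_kernel_prodMk_left (κ := K) hA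

lemma integral_saDist' (μ : Measure X) [IsProbabilityMeasure μ] {π : X → Measure Y}
    (hπ : Measurable π) (hπp : ∀ s, IsProbabilityMeasure (π s)) {f : X × Y → ℝ}
    (hf : Measurable f) {C : ℝ} (h0 : ∀ p, 0 ≤ f p) (h1 : ∀ p, f p ≤ C) :
    ∫ p, f p ∂(saDist μ π) = ∫ s, ∫ a, f (s, a) ∂(π s) ∂μ := by
  have hκ := measurable_saKernel hπ hπp
  have hκp : ∀ s, IsProbabilityMeasure ((π s).map (fun a => (s, a))) := fun s =>
    Measure.isProbabilityMeasure_map measurable_prodMk_left.aemeasurable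
  rw [saDist, integral_bind' μ hκ hκp hf h0 h1]
  refine integral_congr_ae (Filter.Eventually.of_forall fun s => ?_)
  simp only []
  rw [integral_map (f := fun p : X × Y => f p) measurable_prodMk_left.aemeasurable
    hf.aestronglyMeasurable]

lemma isProbabilityMeasure_saDist (μ : Measure X) [IsProbabilityMeasure μ] {π : X → Measure Y}
    (hπ : Measurable π) (hπp : ∀ s, IsProbabilityMeasure (π s)) :
    IsProbabilityMeasure (saDist μ π) :=
  _root_.isProbabilityMeasure_bind μ (measurable_saKernel hπ hπp)
    (fun s => Measure.isProbabilityMeasure_map measurable_prodMk_left.aemeasurable)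

end Helpers2
section Helpers3

variable {X Y : Type*} [MeasurableSpace X] [MeasurableSpace Y]

lemma occ_univ {β : ℝ} (hβ0 : 0 ≤ β) (hβ1 : β < 1) (d : ℕ → Measure X)
    (hd : ∀ t, IsProbabilityMeasure (d t)) : IsProbabilityMeasure (occ β d) := by
  constructor
  rw [occ, Measure.sum_apply _ MeasurableSet.univ]
  have : ∀ t : ℕ, (ENNReal.ofReal ((1 - β) * β ^ t) • d t) Set.univ
      = ENNReal.ofReal ((1 - β) * β ^ t) := by
    intro t
    rw [Measure.smul_apply, measure_univ, smul_eq_mul, mul_one]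
  simp_rw [this]
  rw [← ENNReal.ofReal_tsum_of_nonneg (fun t => mul_nonneg (by linarith) (pow_nonneg hβ0 t))
    (((summable_geometric_of_lt_one hβ0 hβ1)).mul_left _)]
  rw [tsum_mul_left, tsum_geometric_of_lt_one hβ0 hβ1,
    mul_inv_cancel₀ (by linarith), ENNReal.ofReal_one]

lemma integral_occ {β : ℝ} (hβ0 : 0 ≤ β) (hβ1 : β < 1) (d : ℕ → Measure X)
    (hd : ∀ t, IsProbabilityMeasure (d t)) {f : X → ℝ} (hf : Measurable f) {C : ℝ}
    (h0 : ∀ x, 0 ≤ f x) (h1 : ∀ x, f x ≤ C) :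
    ∫ x, f x ∂(occ β d) = ∑' t : ℕ, (1 - β) * β ^ t * ∫ x, f x ∂(d t) := by
  haveI := occ_univ hβ0 hβ1 d hd
  have hbd : ∀ x, ‖f x‖ ≤ C := fun x => by
    rw [Real.norm_eq_abs, abs_of_nonneg (h0 x)]; exact h1 x
  have hint : Integrable f (occ β d) := integrable_of_bound _ hf.aestronglyMeasurable C hbd
  rw [occ] at hint ⊢
  rw [integral_sum_measure hint]
  refine tsum_congr fun t => ?_
  rw [integral_smul_measure, ENNReal.toReal_ofReal (mul_nonneg (by linarith) (pow_nonneg hβ0 t)), smul_eq_mul]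

end Helpers3
section Helpers4

variable {X Y : Type*} [MeasurableSpace X] [MeasurableSpace Y]

lemma integral_le_of_le (μ : Measure X) [IsProbabilityMeasure μ] {f : X → ℝ}
    (hf : Measurable f) {C : ℝ} (h0 : ∀ x, 0 ≤ f x) (h1 : ∀ x, f x ≤ C) :
    ∫ x, f x ∂μ ≤ C := by
  have hbd : ∀ x, ‖f x‖ ≤ C := fun x => by
    rw [Real.norm_eq_abs, abs_of_nonneg (h0 x)]; exact h1 x
  calc ∫ x, f x ∂μ ≤ ∫ _x, C ∂μ :=
        integral_mono (integrable_of_bound μ hf.aestronglyMeasurable C hbd)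
          (integrable_const C) h1
    _ = C := by simp [measure_univ]

end Helpers4

section Main

variable {S Act : Type*} [MeasurableSpace S] [MeasurableSpace Act]

lemma stateDist_succ (μ0 : Measure S) (π : ℕ → S → Measure Act)
    (T : ℕ → S × Act → Measure S) (t : ℕ) :
    stateDist μ0 π T (t + 1) = (saDist (stateDist μ0 π T t) (π t)).bind (T t) := rfl

lemma isProbabilityMeasure_stateDist (μ0 : Measure S) [IsProbabilityMeasure μ0]
    {π : S → Measure Act} {T : S × Act → Measure S}
    (hπ : Measurable π) (hπp : ∀ s, IsProbabilityMeasure (π s))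
    (hT : Measurable T) (hTp : ∀ p, IsProbabilityMeasure (T p)) (t : ℕ) :
    IsProbabilityMeasure (stateDist μ0 (fun _ => π) (fun _ => T) t) := by
  induction t with
  | zero => exact ‹IsProbabilityMeasure μ0›
  | succ t ih =>
    haveI := ih
    haveI := isProbabilityMeasure_saDist (stateDist μ0 (fun _ => π) (fun _ => T) t) hπ hπp
    exact isProbabilityMeasure_bind _ hT hTp

lemma stateDist_integral_diff_le [Nonempty Act]
    (μ0 : Measure S) [IsProbabilityMeasure μ0]
    (π1 π2 : S → Measure Act) (T1 T2 : S × Act → Measure S)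
    (hπ1 : Measurable π1) (hπ2 : Measurable π2)
    (hT1 : Measurable T1) (hT2 : Measurable T2)
    (hπ1p : ∀ s, IsProbabilityMeasure (π1 s)) (hπ2p : ∀ s, IsProbabilityMeasure (π2 s))
    (hT1p : ∀ p, IsProbabilityMeasure (T1 p)) (hT2p : ∀ p, IsProbabilityMeasure (T2 p))
    (επ εm : ℝ)
    (hεπ : ∀ s, tvDist (π1 s) (π2 s) ≤ επ)
    (hmeas : Measurable fun s : S => ⨆ a : Act, tvDist (T1 (s, a)) (T2 (s, a)))
    (hεm : ∀ t : ℕ,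
      ∫ s, (⨆ a : Act, tvDist (T1 (s, a)) (T2 (s, a)))
          ∂(stateDist μ0 (fun _ => π1) (fun _ => T1) t) ≤ εm) :
    ∀ (t : ℕ) (g : S → ℝ), Measurable g → ∀ (C : ℝ), 0 ≤ C → (∀ s, 0 ≤ g s) → (∀ s, g s ≤ C) →
      |∫ s, g s ∂(stateDist μ0 (fun _ => π1) (fun _ => T1) t)
        - ∫ s, g s ∂(stateDist μ0 (fun _ => π2) (fun _ => T2) t)| ≤ C * t * (επ + εm) := by
  -- abbreviations
  set suptv : S → ℝ := fun s => ⨆ a : Act, tvDist (T1 (s, a)) (T2 (s, a)) with hsuptv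
  have hsup0 : ∀ s, 0 ≤ suptv s := fun s => Real.iSup_nonneg fun a => tvDist_nonneg _ _
  have hsup1 : ∀ s, suptv s ≤ 1 := fun s => ciSup_le fun a =>
    @tvDist_le_one _ _ _ _ (hT1p (s, a)) (hT2p (s, a))
  have hsupbdd : ∀ s, BddAbove (Set.range fun a : Act => tvDist (T1 (s, a)) (T2 (s, a))) := by
    intro s
    refine ⟨1, ?_⟩
    rintro y ⟨a, rfl⟩
    exact @tvDist_le_one _ _ _ _ (hT1p (s, a)) (hT2p (s, a))
  intro t
  induction t with
  | zero =>
    intro g hg C hC h0 h1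
    simp [stateDist]
  | succ t ih =>
    intro g hg C hC h0 h1
    set μ1 := stateDist μ0 (fun _ => π1) (fun _ => T1) t with hμ1
    set μ2 := stateDist μ0 (fun _ => π2) (fun _ => T2) t with hμ2
    haveI : IsProbabilityMeasure μ1 := isProbabilityMeasure_stateDist μ0 hπ1 hπ1p hT1 hT1p t
    haveI : IsProbabilityMeasure μ2 := isProbabilityMeasure_stateDist μ0 hπ2 hπ2p hT2 hT2p t
    haveI : IsProbabilityMeasure (saDist μ1 π1) := isProbabilityMeasure_saDist μ1 hπ1 hπ1p
    haveI : IsProbabilityMeasure (saDist μ2 π2) := isProbabilityMeasure_saDist μ2 hπ2 hπ2p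
    set h1f : S × Act → ℝ := fun p => ∫ s', g s' ∂(T1 p) with hh1f
    set h2f : S × Act → ℝ := fun p => ∫ s', g s' ∂(T2 p) with hh2f
    have hh1 : Measurable h1f := measurable_integral_kernel' hT1 hT1p (hg.comp measurable_snd)
    have hh2 : Measurable h2f := measurable_integral_kernel' hT2 hT2p (hg.comp measurable_snd)
    have hh1b : ∀ p, 0 ≤ h1f p ∧ h1f p ≤ C := fun p =>
      ⟨integral_nonneg h0, @integral_le_of_le _ _ _ (hT1p p) _ hg _ h0 h1⟩
    have hh2b : ∀ p, 0 ≤ h2f p ∧ h2f p ≤ C := fun p =>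
      ⟨integral_nonneg h0, @integral_le_of_le _ _ _ (hT2p p) _ hg _ h0 h1⟩
    set F1 : S → ℝ := fun s => ∫ a, h1f (s, a) ∂(π1 s) with hF1
    set F2 : S → ℝ := fun s => ∫ a, h2f (s, a) ∂(π2 s) with hF2
    have hF1m : Measurable F1 := measurable_integral_kernel' hπ1 hπ1p hh1
    have hF2m : Measurable F2 := measurable_integral_kernel' hπ2 hπ2p hh2
    have hF1b : ∀ s, 0 ≤ F1 s ∧ F1 s ≤ C := fun s =>
      ⟨integral_nonneg fun a => (hh1b (s, a)).1,
        @integral_le_of_le _ _ _ (hπ1p s) _ (hh1.comp measurable_prodMk_left) _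
          (fun a => (hh1b (s, a)).1) (fun a => (hh1b (s, a)).2)⟩
    have hF2b : ∀ s, 0 ≤ F2 s ∧ F2 s ≤ C := fun s =>
      ⟨integral_nonneg fun a => (hh2b (s, a)).1,
        @integral_le_of_le _ _ _ (hπ2p s) _ (hh2.comp measurable_prodMk_left) _
          (fun a => (hh2b (s, a)).1) (fun a => (hh2b (s, a)).2)⟩
    -- rewrite the two integrals
    have e1 : ∫ s, g s ∂(stateDist μ0 (fun _ => π1) (fun _ => T1) (t + 1))
        = ∫ s, F1 s ∂μ1 := by
      rw [stateDist_succ, ← hμ1,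
        integral_bind' (saDist μ1 π1) hT1 hT1p hg h0 h1,
        integral_saDist' μ1 hπ1 hπ1p hh1 (fun p => (hh1b p).1) (fun p => (hh1b p).2)]
    have e2 : ∫ s, g s ∂(stateDist μ0 (fun _ => π2) (fun _ => T2) (t + 1))
        = ∫ s, F2 s ∂μ2 := by
      rw [stateDist_succ, ← hμ2,
        integral_bind' (saDist μ2 π2) hT2 hT2p hg h0 h1,
        integral_saDist' μ2 hπ2 hπ2p hh2 (fun p => (hh2b p).1) (fun p => (hh2b p).2)]
    rw [e1, e2]
    -- pointwise bound on |F1 - F2|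
    have key : ∀ s, |F1 s - F2 s| ≤ C * suptv s + C * επ := by
      intro s
      haveI := hπ1p s
      haveI := hπ2p s
      have int1 : Integrable (fun a => h1f (s, a)) (π1 s) :=
        integrable_of_bound _ ((hh1.comp measurable_prodMk_left).aestronglyMeasurable) C
          (fun a => by rw [Real.norm_eq_abs, abs_of_nonneg (hh1b (s, a)).1]; exact (hh1b (s, a)).2)
      have int2 : Integrable (fun a => h2f (s, a)) (π1 s) :=
        integrable_of_bound _ ((hh2.comp measurable_prodMk_left).aestronglyMeasurable) C
          (fun a => by rw [Real.norm_eq_abs, abs_of_nonneg (hh2b (s, a)).1]; exact (hh2b (s, a)).2)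
      have step1 : |∫ a, h1f (s, a) ∂(π1 s) - ∫ a, h2f (s, a) ∂(π1 s)| ≤ C * suptv s := by
        rw [← integral_sub int1 int2]
        calc |∫ a, (h1f (s, a) - h2f (s, a)) ∂(π1 s)|
            ≤ ∫ a, |h1f (s, a) - h2f (s, a)| ∂(π1 s) := by
              simpa [Real.norm_eq_abs] using
                norm_integral_le_integral_norm (fun a => h1f (s, a) - h2f (s, a))
          _ ≤ C * suptv s := by
              refine integral_le_of_le (π1 s) ((hh1.comp measurable_prodMk_left).sub
                (hh2.comp measurable_prodMk_left)).abs (fun a => abs_nonneg _) (fun a => ?_)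
              calc |h1f (s, a) - h2f (s, a)| ≤ C * tvDist (T1 (s, a)) (T2 (s, a)) :=
                    @abs_integral_sub_le_tvDist _ _ _ _ (hT1p (s, a)) (hT2p (s, a)) _ hg _ hC h0 h1
                _ ≤ C * suptv s :=
                    mul_le_mul_of_nonneg_left (le_ciSup (hsupbdd s) a) hC
      have step2 : |∫ a, h2f (s, a) ∂(π1 s) - ∫ a, h2f (s, a) ∂(π2 s)| ≤ C * επ := by
        calc |∫ a, h2f (s, a) ∂(π1 s) - ∫ a, h2f (s, a) ∂(π2 s)|
            ≤ C * tvDist (π1 s) (π2 s) :=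
              abs_integral_sub_le_tvDist (π1 s) (π2 s) (hh2.comp measurable_prodMk_left) hC
                (fun a => (hh2b (s, a)).1) (fun a => (hh2b (s, a)).2)
          _ ≤ C * επ := mul_le_mul_of_nonneg_left (hεπ s) hC
      calc |F1 s - F2 s|
          ≤ |∫ a, h1f (s, a) ∂(π1 s) - ∫ a, h2f (s, a) ∂(π1 s)|
            + |∫ a, h2f (s, a) ∂(π1 s) - ∫ a, h2f (s, a) ∂(π2 s)| := by
            rw [hF1, hF2]; exact abs_sub_le _ _ _
        _ ≤ C * suptv s + C * επ := add_le_add step1 step2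
    -- put the pieces together
    have hFdiff_int : Integrable (fun s => F1 s - F2 s) μ1 := by
      refine integrable_of_bound μ1 ((hF1m.sub hF2m).aestronglyMeasurable) C (fun s => ?_)
      rw [Real.norm_eq_abs, abs_sub_le_iff]
      constructor <;> [linarith [(hF1b s).2, (hF2b s).1]; linarith [(hF2b s).2, (hF1b s).1]]
    have hsupint : Integrable suptv μ1 :=
      integrable_of_bound μ1 hmeas.aestronglyMeasurable 1
        (fun s => by rw [Real.norm_eq_abs, abs_of_nonneg (hsup0 s)]; exact hsup1 s)
    have term1 : |∫ s, F1 s ∂μ1 - ∫ s, F2 s ∂μ1| ≤ C * εm + C * επ := by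
      have intF1 : Integrable F1 μ1 := integrable_of_bound μ1 hF1m.aestronglyMeasurable C
        (fun s => by rw [Real.norm_eq_abs, abs_of_nonneg (hF1b s).1]; exact (hF1b s).2)
      have intF2 : Integrable F2 μ1 := integrable_of_bound μ1 hF2m.aestronglyMeasurable C
        (fun s => by rw [Real.norm_eq_abs, abs_of_nonneg (hF2b s).1]; exact (hF2b s).2)
      rw [← integral_sub intF1 intF2]
      calc |∫ s, (F1 s - F2 s) ∂μ1| ≤ ∫ s, |F1 s - F2 s| ∂μ1 := by
            simpa [Real.norm_eq_abs] using
              norm_integral_le_integral_norm (μ := μ1) (fun s => F1 s - F2 s)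
        _ ≤ ∫ s, (C * suptv s + C * επ) ∂μ1 := by
            refine integral_mono hFdiff_int.abs ?_ key
            exact (hsupint.const_mul C).add (integrable_const _)
        _ = C * (∫ s, suptv s ∂μ1) + C * επ := by
            rw [integral_add (hsupint.const_mul C) (integrable_const _),
              integral_const_mul]
            simp [measure_univ]
        _ ≤ C * εm + C * επ :=
            add_le_add (mul_le_mul_of_nonneg_left (hεm t) hC) le_rfl
    have term2 : |∫ s, F2 s ∂μ1 - ∫ s, F2 s ∂μ2| ≤ C * t * (επ + εm) :=
      ih F2 hF2m C hC (fun s => (hF2b s).1) (fun s => (hF2b s).2)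
    calc |∫ s, F1 s ∂μ1 - ∫ s, F2 s ∂μ2|
        ≤ |∫ s, F1 s ∂μ1 - ∫ s, F2 s ∂μ1| + |∫ s, F2 s ∂μ1 - ∫ s, F2 s ∂μ2| :=
          abs_sub_le _ _ _
      _ ≤ (C * εm + C * επ) + C * t * (επ + εm) := add_le_add term1 term2
      _ = C * (t + 1 : ℕ) * (επ + εm) := by push_cast; ring

end Main
section FinalArith

lemma final_arith (γ β rmax επ εm : ℝ) (h1γ : 0 < 1 - γ) (hβ0 : 0 ≤ β) (hβ1 : β < 1)
    (hrmax : 0 ≤ rmax) (hεπ0 : 0 ≤ επ) (hεm0 : 0 ≤ εm) :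
    (1 - β)⁻¹ * ((1 - β) * (rmax * (1 - β) / (1 - γ) * επ) * (1 - β)⁻¹
        + (1 - β) * (rmax * (1 - β) / (1 - γ) * (επ + εm)) * (β / (1 - β) ^ 2))
      ≤ 2 * rmax / (1 - γ) * (β / (1 - β) * επ + επ + β / (1 - β) * εm) := by
  have h1β : 0 < 1 - β := by linarith
  have hL : (1 - β)⁻¹ * ((1 - β) * (rmax * (1 - β) / (1 - γ) * επ) * (1 - β)⁻¹
        + (1 - β) * (rmax * (1 - β) / (1 - γ) * (επ + εm)) * (β / (1 - β) ^ 2))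
      = rmax / (1 - γ) * επ + rmax / (1 - γ) * (επ + εm) * (β / (1 - β)) := by
    field_simp
  rw [hL]
  have hq : 0 ≤ β / (1 - β) := div_nonneg hβ0 (le_of_lt h1β)
  have hc : 0 ≤ rmax / (1 - γ) := div_nonneg hrmax (le_of_lt h1γ)
  have h2 : 2 * rmax / (1 - γ) = 2 * (rmax / (1 - γ)) := by ring
  rw [h2]
  nlinarith [mul_nonneg hc (mul_nonneg hq hεπ0), mul_nonneg hc (mul_nonneg hq hεm0),
    mul_nonneg hc hεπ0]

end FinalArith

/-- value divergence of a chunk-level policy in a chunk-level world model.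
Two chunk-level policies `π₁^k, π₂^k` are evaluated in chunk-level world models
`T₁^k, T₂^k` from the same initial state distribution, with chunk rewards bounded by
`r_max (1 − γ^k)/(1 − γ)`. If `ε_π^k` bounds `sup_s D_TV(π₁^k(·|s), π₂^k(·|s))` and
`ε_m^k` bounds `sup_t E_{s∼d_t^{π₁^k}}[D_TV(T₁^k(·|s,ã), T₂^k(·|s,ã))]` (uniformly in
the chunk action `ã`), then
`|V(π₁^k) − V(π₂^k)| ≤ (2 r_max/(1−γ)) [ (γ^k/(1−γ^k)) ε_π^k + ε_π^k + (γ^k/(1−γ^k)) ε_m^k ]`. -/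
theorem abs_value_sub_le_of_policy_and_model_error
    {S Act : Type*} [MeasurableSpace S] [MeasurableSpace Act]
    (γ rmax : ℝ) (k : ℕ) (hγ0 : 0 < γ) (hγ1 : γ < 1) (hk : 1 ≤ k)
    (μ0 : Measure S) [IsProbabilityMeasure μ0]
    (π1 π2 : S → Measure Act) (T1 T2 : S × Act → Measure S)
    (hπ1 : Measurable π1) (hπ2 : Measurable π2)
    (hT1 : Measurable T1) (hT2 : Measurable T2)
    (hπ1p : ∀ s, IsProbabilityMeasure (π1 s)) (hπ2p : ∀ s, IsProbabilityMeasure (π2 s))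
    (hT1p : ∀ p, IsProbabilityMeasure (T1 p)) (hT2p : ∀ p, IsProbabilityMeasure (T2 p))
    (rew : S × Act → ℝ) (hrew : Measurable rew)
    (hr0 : ∀ p, 0 ≤ rew p) (hr1 : ∀ p, rew p ≤ rmax * (1 - γ ^ k) / (1 - γ))
    (επ εm : ℝ)
    (hεπ : ∀ s, tvDist (π1 s) (π2 s) ≤ επ)
    (hmeas : Measurable fun s : S => ⨆ a : Act, tvDist (T1 (s, a)) (T2 (s, a)))
    (hεm : ∀ t : ℕ,
      ∫ s, (⨆ a : Act, tvDist (T1 (s, a)) (T2 (s, a)))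
          ∂(stateDist μ0 (fun _ => π1) (fun _ => T1) t) ≤ εm) :
    |value (γ ^ k) rew μ0 (fun _ => π1) (fun _ => T1) -
        value (γ ^ k) rew μ0 (fun _ => π2) (fun _ => T2)|
      ≤ 2 * rmax / (1 - γ) *
          (γ ^ k / (1 - γ ^ k) * επ + επ + γ ^ k / (1 - γ ^ k) * εm) := by
  -- nonemptiness
  haveI hS : Nonempty S := by
    by_contra h
    rw [not_nonempty_iff] at h
    have h1 : μ0 Set.univ = 1 := measure_univ
    rw [Set.univ_eq_empty_iff.mpr h] at h1
    simp at h1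
  have s0 : S := Classical.arbitrary S
  haveI hA : Nonempty Act := by
    by_contra h
    rw [not_nonempty_iff] at h
    haveI := hπ1p s0
    have h1 : π1 s0 Set.univ = 1 := measure_univ
    rw [Set.univ_eq_empty_iff.mpr h] at h1
    simp at h1
  have a0 : Act := Classical.arbitrary Act
  -- basic positivity facts
  have hβ1 : γ ^ k < 1 := pow_lt_one₀ (le_of_lt hγ0) hγ1 (by omega)
  have hβ0 : 0 < γ ^ k := pow_pos hγ0 k
  have h1γ : 0 < 1 - γ := by linarith
  have h1β : 0 < 1 - γ ^ k := by linarith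
  set β : ℝ := γ ^ k with hβ
  set R : ℝ := rmax * (1 - β) / (1 - γ) with hRdef
  have hR0 : 0 ≤ R := le_trans (hr0 (s0, a0)) (hr1 (s0, a0))
  have hrmax : 0 ≤ rmax := by
    have hR0' : 0 ≤ rmax * (1 - β) * (1 - γ)⁻¹ := by
      rw [← div_eq_mul_inv]; exact hR0
    have h2 : 0 ≤ rmax * (1 - β) := by
      have h3 := mul_nonneg hR0' (le_of_lt h1γ)
      calc (0:ℝ) ≤ rmax * (1 - β) * (1 - γ)⁻¹ * (1 - γ) := h3
        _ = rmax * (1 - β) := by field_simp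
    by_contra h
    push_neg at h
    exact absurd h2 (not_le.mpr (mul_neg_of_neg_of_pos h h1β))
  have hεπ0 : 0 ≤ επ := le_trans (tvDist_nonneg (π1 s0) (π2 s0)) (hεπ s0)
  have hεm0 : 0 ≤ εm :=
    le_trans (integral_nonneg fun s => Real.iSup_nonneg fun a => tvDist_nonneg _ _) (hεm 0)
  -- probability instances
  haveI hst1 : ∀ t, IsProbabilityMeasure (stateDist μ0 (fun _ => π1) (fun _ => T1) t) :=
    fun t => isProbabilityMeasure_stateDist μ0 hπ1 hπ1p hT1 hT1p t
  haveI hst2 : ∀ t, IsProbabilityMeasure (stateDist μ0 (fun _ => π2) (fun _ => T2) t) :=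
    fun t => isProbabilityMeasure_stateDist μ0 hπ2 hπ2p hT2 hT2p t
  have hsa1 : ∀ t, IsProbabilityMeasure (saDistAt μ0 (fun _ => π1) (fun _ => T1) t) := fun t =>
    isProbabilityMeasure_saDist _ hπ1 hπ1p
  have hsa2 : ∀ t, IsProbabilityMeasure (saDistAt μ0 (fun _ => π2) (fun _ => T2) t) := fun t =>
    isProbabilityMeasure_saDist _ hπ2 hπ2p
  -- reward bound
  have hrbd : ∀ p, rew p ≤ R := hr1
  -- per-step integrals
  set I1 : ℕ → ℝ := fun t => ∫ p, rew p ∂(saDistAt μ0 (fun _ => π1) (fun _ => T1) t) with hI1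
  set I2 : ℕ → ℝ := fun t => ∫ p, rew p ∂(saDistAt μ0 (fun _ => π2) (fun _ => T2) t) with hI2
  have hIbd1 : ∀ t, 0 ≤ I1 t ∧ I1 t ≤ R := fun t =>
    ⟨integral_nonneg hr0, @integral_le_of_le _ _ _ (hsa1 t) _ hrew _ hr0 hrbd⟩
  have hIbd2 : ∀ t, 0 ≤ I2 t ∧ I2 t ≤ R := fun t =>
    ⟨integral_nonneg hr0, @integral_le_of_le _ _ _ (hsa2 t) _ hrew _ hr0 hrbd⟩
  -- per-step difference bound
  have hDt : ∀ t : ℕ, |I1 t - I2 t| ≤ R * επ + R * t * (επ + εm) := by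
    intro t
    set μ1 := stateDist μ0 (fun _ => π1) (fun _ => T1) t with hμ1
    set μ2 := stateDist μ0 (fun _ => π2) (fun _ => T2) t with hμ2
    haveI : IsProbabilityMeasure μ1 := hst1 t
    haveI : IsProbabilityMeasure μ2 := hst2 t
    set G1 : S → ℝ := fun s => ∫ a, rew (s, a) ∂(π1 s) with hG1
    set G2 : S → ℝ := fun s => ∫ a, rew (s, a) ∂(π2 s) with hG2
    have hG1m : Measurable G1 := measurable_integral_kernel' hπ1 hπ1p hrew
    have hG2m : Measurable G2 := measurable_integral_kernel' hπ2 hπ2p hrew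
    have hG1b : ∀ s, 0 ≤ G1 s ∧ G1 s ≤ R := fun s =>
      ⟨integral_nonneg fun a => hr0 _,
        @integral_le_of_le _ _ _ (hπ1p s) _ (hrew.comp measurable_prodMk_left) _
          (fun a => hr0 _) (fun a => hrbd _)⟩
    have hG2b : ∀ s, 0 ≤ G2 s ∧ G2 s ≤ R := fun s =>
      ⟨integral_nonneg fun a => hr0 _,
        @integral_le_of_le _ _ _ (hπ2p s) _ (hrew.comp measurable_prodMk_left) _
          (fun a => hr0 _) (fun a => hrbd _)⟩
    have e1 : I1 t = ∫ s, G1 s ∂μ1 := by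
      rw [hI1]
      exact integral_saDist' μ1 hπ1 hπ1p hrew hr0 hrbd
    have e2 : I2 t = ∫ s, G2 s ∂μ2 := by
      rw [hI2]
      exact integral_saDist' μ2 hπ2 hπ2p hrew hr0 hrbd
    rw [e1, e2]
    have key : ∀ s, |G1 s - G2 s| ≤ R * επ := by
      intro s
      haveI := hπ1p s
      haveI := hπ2p s
      calc |G1 s - G2 s| ≤ R * tvDist (π1 s) (π2 s) :=
            abs_integral_sub_le_tvDist (π1 s) (π2 s) (hrew.comp measurable_prodMk_left) hR0
              (fun a => hr0 _) (fun a => hrbd _)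
        _ ≤ R * επ := mul_le_mul_of_nonneg_left (hεπ s) hR0
    have intG1 : Integrable G1 μ1 := integrable_of_bound μ1 hG1m.aestronglyMeasurable R
      (fun s => by rw [Real.norm_eq_abs, abs_of_nonneg (hG1b s).1]; exact (hG1b s).2)
    have intG2 : Integrable G2 μ1 := integrable_of_bound μ1 hG2m.aestronglyMeasurable R
      (fun s => by rw [Real.norm_eq_abs, abs_of_nonneg (hG2b s).1]; exact (hG2b s).2)
    have term1 : |∫ s, G1 s ∂μ1 - ∫ s, G2 s ∂μ1| ≤ R * επ := by
      rw [← integral_sub intG1 intG2]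
      calc |∫ s, (G1 s - G2 s) ∂μ1| ≤ ∫ s, |G1 s - G2 s| ∂μ1 := by
            simpa [Real.norm_eq_abs] using
              norm_integral_le_integral_norm (μ := μ1) (fun s => G1 s - G2 s)
        _ ≤ R * επ :=
            integral_le_of_le μ1 (hG1m.sub hG2m).abs (fun s => abs_nonneg _) key
    have term2 : |∫ s, G2 s ∂μ1 - ∫ s, G2 s ∂μ2| ≤ R * t * (επ + εm) := by
      rw [hμ1, hμ2]
      exact stateDist_integral_diff_le μ0 π1 π2 T1 T2 hπ1 hπ2 hT1 hT2 hπ1p hπ2p hT1p hT2p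
        επ εm hεπ hmeas hεm t G2 hG2m R hR0 (fun s => (hG2b s).1) (fun s => (hG2b s).2)
    calc |∫ s, G1 s ∂μ1 - ∫ s, G2 s ∂μ2|
        ≤ |∫ s, G1 s ∂μ1 - ∫ s, G2 s ∂μ1| + |∫ s, G2 s ∂μ1 - ∫ s, G2 s ∂μ2| :=
          abs_sub_le _ _ _
      _ ≤ R * επ + R * t * (επ + εm) := add_le_add term1 term2
  -- value as a series
  have hV1 : value β rew μ0 (fun _ => π1) (fun _ => T1)
      = (1 - β)⁻¹ * ∑' t : ℕ, (1 - β) * β ^ t * I1 t := by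
    rw [value, integral_occ (le_of_lt hβ0) hβ1 _ hsa1 hrew hr0 hrbd]
  have hV2 : value β rew μ0 (fun _ => π2) (fun _ => T2)
      = (1 - β)⁻¹ * ∑' t : ℕ, (1 - β) * β ^ t * I2 t := by
    rw [value, integral_occ (le_of_lt hβ0) hβ1 _ hsa2 hrew hr0 hrbd]
  have hc0 : ∀ t : ℕ, 0 ≤ (1 - β) * β ^ t := fun t =>
    mul_nonneg (by linarith) (pow_nonneg (le_of_lt hβ0) t)
  have Sgeom : Summable fun t : ℕ => β ^ t := summable_geometric_of_lt_one (le_of_lt hβ0) hβ1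
  have St : Summable fun t : ℕ => (t : ℝ) * β ^ t := by
    have := summable_pow_mul_geometric_of_norm_lt_one (R := ℝ) 1
      (r := β) (by rw [Real.norm_eq_abs, abs_of_nonneg (le_of_lt hβ0)]; exact hβ1)
    simpa [pow_one] using this
  have hs1 : Summable fun t : ℕ => (1 - β) * β ^ t * I1 t := by
    refine Summable.of_norm_bounded (g := fun t => (1 - β) * β ^ t * R)
      ((Sgeom.mul_left (1 - β)).mul_right R) (fun t => ?_)
    rw [Real.norm_eq_abs, abs_mul, abs_of_nonneg (hc0 t), abs_of_nonneg (hIbd1 t).1]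
    exact mul_le_mul_of_nonneg_left (hIbd1 t).2 (hc0 t)
  have hs2 : Summable fun t : ℕ => (1 - β) * β ^ t * I2 t := by
    refine Summable.of_norm_bounded (g := fun t => (1 - β) * β ^ t * R)
      ((Sgeom.mul_left (1 - β)).mul_right R) (fun t => ?_)
    rw [Real.norm_eq_abs, abs_mul, abs_of_nonneg (hc0 t), abs_of_nonneg (hIbd2 t).1]
    exact mul_le_mul_of_nonneg_left (hIbd2 t).2 (hc0 t)
  have hsumbound : Summable fun t : ℕ =>
      (1 - β) * β ^ t * (R * επ) + (1 - β) * ((t : ℝ) * β ^ t) * (R * (επ + εm)) :=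
    ((Sgeom.mul_left (1 - β)).mul_right (R * επ)).add
      ((St.mul_left (1 - β)).mul_right (R * (επ + εm)))
  have pointwise : ∀ t : ℕ, |(1 - β) * β ^ t * I1 t - (1 - β) * β ^ t * I2 t|
      ≤ (1 - β) * β ^ t * (R * επ) + (1 - β) * ((t : ℝ) * β ^ t) * (R * (επ + εm)) := by
    intro t
    rw [← mul_sub, abs_mul, abs_of_nonneg (hc0 t)]
    calc (1 - β) * β ^ t * |I1 t - I2 t|
        ≤ (1 - β) * β ^ t * (R * επ + R * t * (επ + εm)) :=
          mul_le_mul_of_nonneg_left (hDt t) (hc0 t)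
      _ = (1 - β) * β ^ t * (R * επ) + (1 - β) * ((t : ℝ) * β ^ t) * (R * (επ + εm)) := by
          ring
  -- bound the series difference
  have hdiff : |∑' t : ℕ, (1 - β) * β ^ t * I1 t - ∑' t : ℕ, (1 - β) * β ^ t * I2 t|
      ≤ (1 - β) * (R * επ) * (1 - β)⁻¹ + (1 - β) * (R * (επ + εm)) * (β / (1 - β) ^ 2) := by
    rw [← Summable.tsum_sub hs1 hs2]
    have habs : Summable fun t : ℕ =>
        |(1 - β) * β ^ t * I1 t - (1 - β) * β ^ t * I2 t| := (hs1.sub hs2).abs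
    calc |∑' t : ℕ, ((1 - β) * β ^ t * I1 t - (1 - β) * β ^ t * I2 t)|
        ≤ ∑' t : ℕ, |(1 - β) * β ^ t * I1 t - (1 - β) * β ^ t * I2 t| := by
          simpa [Real.norm_eq_abs] using norm_tsum_le_tsum_norm (f := fun t : ℕ =>
            (1 - β) * β ^ t * I1 t - (1 - β) * β ^ t * I2 t) habs
      _ ≤ ∑' t : ℕ, ((1 - β) * β ^ t * (R * επ)
            + (1 - β) * ((t : ℝ) * β ^ t) * (R * (επ + εm))) :=
          Summable.tsum_le_tsum pointwise habs hsumbound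
      _ = (1 - β) * (R * επ) * (1 - β)⁻¹ + (1 - β) * (R * (επ + εm)) * (β / (1 - β) ^ 2) := by
          rw [Summable.tsum_add ((Sgeom.mul_left (1 - β)).mul_right (R * επ))
            ((St.mul_left (1 - β)).mul_right (R * (επ + εm)))]
          congr 1
          · have : (fun t : ℕ => (1 - β) * β ^ t * (R * επ))
                = fun t : ℕ => ((1 - β) * (R * επ)) * β ^ t := by
              funext t; ring
            rw [this, tsum_mul_left, tsum_geometric_of_lt_one (le_of_lt hβ0) hβ1]
          · have : (fun t : ℕ => (1 - β) * ((t : ℝ) * β ^ t) * (R * (επ + εm)))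
                = fun t : ℕ => ((1 - β) * (R * (επ + εm))) * ((t : ℝ) * β ^ t) := by
              funext t; ring
            rw [this, tsum_mul_left, tsum_coe_mul_geometric_of_norm_lt_one
              (by rw [Real.norm_eq_abs, abs_of_nonneg (le_of_lt hβ0)]; exact hβ1)]
  -- conclude
  rw [hV1, hV2, ← mul_sub, abs_mul, abs_of_nonneg (le_of_lt (inv_pos.mpr h1β))]
  calc (1 - β)⁻¹ * |∑' t : ℕ, (1 - β) * β ^ t * I1 t - ∑' t : ℕ, (1 - β) * β ^ t * I2 t|
      ≤ (1 - β)⁻¹ * ((1 - β) * (R * επ) * (1 - β)⁻¹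
          + (1 - β) * (R * (επ + εm)) * (β / (1 - β) ^ 2)) :=
        mul_le_mul_of_nonneg_left hdiff (le_of_lt (inv_pos.mpr h1β))
    _ ≤ 2 * rmax / (1 - γ) * (β / (1 - β) * επ + επ + β / (1 - β) * εm) := by
        rw [hRdef]
        exact final_arith γ β rmax επ εm h1γ (le_of_lt hβ0) hβ1 hrmax hεπ0 hεm0
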